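/- Suppose the finite simplicial graph Γ has no SIL. Then for every equivalence class X and every X-component C, the subgroup A^X_C of Out(A_Γ) generated by the images of the partial conjugations in the set P^X_C is a normal subgroup of SOut⁰(A_Γ). -/

import Mathlib

open SimpleGraph

namespace RaagPaper

/-- The star of a vertex: the vertex together with its neighbours. -/
def star {V : Type} (G : SimpleGraph V) (v : V) : Set V := insert v (G.neighborSet v)

/-- Domination: `u ≤ v` iff `lk(u) ⊆ st(v)`. -/
def Dom {V : Type} (G : SimpleGraph V) (u v : V) : Prop := G.neighborSet u ⊆ star G v

/-- Domination-equivalence of vertices. -/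
def EquivDom {V : Type} (G : SimpleGraph V) (u v : V) : Prop := Dom G u v ∧ Dom G v u

/-- The domination-equivalence class of a vertex. -/
def eqClass {V : Type} (G : SimpleGraph V) (x : V) : Set V := {v | EquivDom G v x}

/-- `C` is (the vertex set of) a connected component of the subgraph of `G` induced on `S`. -/
def IsCC {V : Type} (G : SimpleGraph V) (S : Set V) (C : Set V) : Prop :=
  ∃ v : S, C = {w : V | ∃ h : w ∈ S, (G.induce S).Reachable ⟨w, h⟩ v}

/-- `(x,y|z)` is a separating intersection of links (SIL). -/
def IsSIL {V : Type} (G : SimpleGraph V) (x y z : V) : Prop :=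
  x ≠ y ∧ x ≠ z ∧ y ≠ z ∧ ¬ G.Adj x y ∧ ¬ G.Adj x z ∧ ¬ G.Adj y z ∧
  ∀ C : Set V, IsCC G ((G.neighborSet x ∩ G.neighborSet y)ᶜ) C → z ∈ C → x ∉ C ∧ y ∉ C

/-- The graph has no SIL. -/
def HasNoSIL {V : Type} (G : SimpleGraph V) : Prop := ∀ x y z, ¬ IsSIL G x y z

/-- `D` is a (possibly empty) union of connected components of `Γ ∖ st(x)`. -/
def IsUnionCC {V : Type} (G : SimpleGraph V) (x : V) (D : Set V) : Prop :=
  ∃ 𝒞 : Set (Set V), (∀ C ∈ 𝒞, IsCC G ((star G x)ᶜ) C) ∧ D = ⋃₀ 𝒞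


/-- Defining relators of the RAAG: commutators of adjacent vertices. -/
def Rels {V : Type} (G : SimpleGraph V) : Set (FreeGroup V) :=
  {r | ∃ u v : V, G.Adj u v ∧
    r = FreeGroup.of u * FreeGroup.of v * (FreeGroup.of u)⁻¹ * (FreeGroup.of v)⁻¹}

/-- The right-angled Artin group on `G`. -/
abbrev Raag {V : Type} (G : SimpleGraph V) : Type := PresentedGroup (Rels G)

/-- The generator of `Raag G` corresponding to a vertex. -/
def gen {V : Type} (G : SimpleGraph V) (v : V) : Raag G := PresentedGroup.of v

/-- `φ` is the partial conjugation conjugating the vertices of `C` by `x`. -/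
def IsPartialConj {V : Type} (G : SimpleGraph V) (x : V) (C : Set V)
    (φ : MulAut (Raag G)) : Prop :=
  (∀ v ∈ C, φ (gen G v) = (gen G x)⁻¹ * gen G v * gen G x) ∧
  (∀ v ∉ C, φ (gen G v) = gen G v)

/-- `φ` is the transvection `R_u^v`, sending `u ↦ uv` and fixing all other vertices. -/
def IsTransvection {V : Type} (G : SimpleGraph V) (u v : V)
    (φ : MulAut (Raag G)) : Prop :=
  φ (gen G u) = gen G u * gen G v ∧ ∀ w : V, w ≠ u → φ (gen G w) = gen G w

/-- The subgroup of inner automorphisms of a group. -/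
def Inn (H : Type*) [Group H] : Subgroup (MulAut H) := (MulAut.conj : H →* MulAut H).range

instance Inn.normal (H : Type*) [Group H] : (Inn H).Normal := by
  constructor
  rintro a ⟨g, rfl⟩ f
  refine ⟨f g, ?_⟩
  ext x
  simp [MulAut.conj_apply, map_mul, map_inv]

/-- The outer automorphism group. -/
abbrev Out (H : Type*) [Group H] : Type _ := MulAut H ⧸ Inn H

/-- Projection from automorphisms to outer automorphisms. -/
def toOut (H : Type*) [Group H] : MulAut H →* Out H := QuotientGroup.mk' (Inn H)

/-- The homomorphism sending an automorphism to the induced automorphism of the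
abelianization. -/
def abAut (H : Type*) [Group H] : MulAut H →* MulAut (Abelianization H) where
  toFun e := MulEquiv.abelianizationCongr e
  map_one' := by
    apply MulEquiv.toMonoidHom_injective
    apply Abelianization.hom_ext
    ext x
    simp [abelianizationCongr_of]
  map_mul' f g := by
    apply MulEquiv.toMonoidHom_injective
    apply Abelianization.hom_ext
    ext x
    simp [abelianizationCongr_of, MulAut.mul_apply]

lemma abAut_inn (H : Type*) [Group H] : ∀ a ∈ Inn H, abAut H a = 1 := by
  rintro a ⟨g, rfl⟩
  apply MulEquiv.toMonoidHom_injective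
  apply Abelianization.hom_ext
  ext x
  simp [abAut, abelianizationCongr_of, MulAut.conj_apply, mul_comm]

/-- The standard map `ρ : Out(H) → Aut(Hᵃᵇ)` induced by acting on the abelianization. -/
def rhoOut (H : Type*) [Group H] : Out H →* MulAut (Abelianization H) :=
  QuotientGroup.lift (Inn H) (abAut H) (abAut_inn H)

end RaagPaper

namespace RaagPaper

/-- The generating set of `SOut⁰(A_Γ)`: images of all transvections and all partial
conjugations. -/
def SOutGens {V : Type} (G : SimpleGraph V) : Set (Out (Raag G)) :=
  {o | ∃ φ : MulAut (Raag G), o = toOut (Raag G) φ ∧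
    ((∃ u v : V, u ≠ v ∧ Dom G u v ∧ IsTransvection G u v φ) ∨
     (∃ (x : V) (C : Set V), IsUnionCC G x C ∧ IsPartialConj G x C φ))}

/-- `SOut⁰(A_Γ)`, the subgroup of `Out(A_Γ)` generated by the images of all
transvections and all partial conjugations. -/
def SOut0 {V : Type} (G : SimpleGraph V) : Subgroup (Out (Raag G)) :=
  Subgroup.closure (SOutGens G)

/-- The set `P^X_C` of images of the partial conjugations `π^w_{C∖st(w)}` over all
vertices `w` dominating every element of `X`. -/
def PXC {V : Type} (G : SimpleGraph V) (X C : Set V) : Set (Out (Raag G)) :=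
  {o | ∃ (w : V) (φ : MulAut (Raag G)), (∀ x ∈ X, Dom G x w) ∧
    IsPartialConj G w (C \ star G w) φ ∧ o = toOut (Raag G) φ}

end RaagPaper

namespace RaagPaper

open scoped Classical

variable {V : Type} {G : SimpleGraph V}

lemma mem_star_iff {u v : V} : u ∈ star G v ↔ u = v ∨ G.Adj v u := by
  simp [star, SimpleGraph.mem_neighborSet]

lemma self_mem_star (v : V) : v ∈ star G v := Or.inl rfl |> mem_star_iff.mpr

lemma adj_mem_star {u v : V} (h : G.Adj v u) : u ∈ star G v := mem_star_iff.mpr (Or.inr h)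

lemma not_mem_star_iff {u v : V} : u ∉ star G v ↔ u ≠ v ∧ ¬ G.Adj v u := by
  rw [mem_star_iff]; tauto

lemma gen_comm {u v : V} (h : G.Adj u v) : Commute (gen G u) (gen G v) := by
  have hmem : (FreeGroup.of u * FreeGroup.of v * (FreeGroup.of u)⁻¹ * (FreeGroup.of v)⁻¹ :
      FreeGroup V) ∈ Subgroup.normalClosure (Rels G) :=
    Subgroup.subset_normalClosure ⟨u, v, h, rfl⟩
  have h1 : PresentedGroup.mk (Rels G)
      (FreeGroup.of u * FreeGroup.of v * (FreeGroup.of u)⁻¹ * (FreeGroup.of v)⁻¹) = 1 :=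
    (QuotientGroup.eq_one_iff _).mpr hmem
  have h2 : gen G u * gen G v * (gen G u)⁻¹ * (gen G v)⁻¹ = 1 := by
    simpa [gen, PresentedGroup.of, map_mul, map_inv] using h1
  refine commutatorElement_eq_one_iff_commute.mp ?_
  rw [commutatorElement_def]
  exact h2

lemma gen_comm_star {u w : V} (h : u ∈ star G w) : Commute (gen G w) (gen G u) := by
  rcases mem_star_iff.mp h with rfl | h
  · rfl
  · exact gen_comm h

lemma conj_star_eq {v w : V} (hv : v ∈ star G w) :
    (gen G w)⁻¹ * gen G v * gen G w = gen G v := by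
  rw [mul_assoc, ← (gen_comm_star hv).eq]
  group

lemma aut_ext {φ ψ : MulAut (Raag G)} (h : ∀ v, φ (gen G v) = ψ (gen G v)) : φ = ψ := by
  apply MulEquiv.toMonoidHom_injective
  exact PresentedGroup.ext h

lemma toOut_conj (g : Raag G) : toOut (Raag G) (MulAut.conj g) = 1 := by
  rw [toOut, QuotientGroup.mk'_apply, QuotientGroup.eq_one_iff]
  exact ⟨g, rfl⟩

section PC

variable {w : V} {S S' : Set V} {φ ψ : MulAut (Raag G)}

lemma pc_apply_mem (hφ : IsPartialConj G w S φ) {v : V} (hv : v ∈ S) :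
    φ (gen G v) = (gen G w)⁻¹ * gen G v * gen G w := hφ.1 v hv

lemma pc_apply_not_mem (hφ : IsPartialConj G w S φ) {v : V} (hv : v ∉ S) :
    φ (gen G v) = gen G v := hφ.2 v hv

lemma pc_apply_star (hφ : IsPartialConj G w S φ) {v : V} (hv : v ∈ star G w) :
    φ (gen G v) = gen G v := by
  by_cases h : v ∈ S
  · rw [pc_apply_mem hφ h, conj_star_eq hv]
  · exact pc_apply_not_mem hφ h

lemma pc_apply_self (hφ : IsPartialConj G w S φ) : φ (gen G w) = gen G w :=
  pc_apply_star hφ (self_mem_star w)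

lemma pc_congr (hφ : IsPartialConj G w S φ) (hψ : IsPartialConj G w S' ψ)
    (h : ∀ v, v ∉ star G w → (v ∈ S ↔ v ∈ S')) : φ = ψ := by
  apply aut_ext
  intro v
  by_cases hst : v ∈ star G w
  · rw [pc_apply_star hφ hst, pc_apply_star hψ hst]
  · by_cases hv : v ∈ S
    · rw [pc_apply_mem hφ hv, pc_apply_mem hψ ((h v hst).mp hv)]
    · rw [pc_apply_not_mem hφ hv, pc_apply_not_mem hψ (fun hc => hv ((h v hst).mpr hc))]

lemma pc_one : IsPartialConj G w (∅ : Set V) (1 : MulAut (Raag G)) :=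
  ⟨fun v hv => absurd hv (Set.notMem_empty v), fun _ _ => rfl⟩

lemma pc_eq_one (hφ : IsPartialConj G w S φ) (h : ∀ v ∈ S, v ∈ star G w) : φ = 1 :=
  pc_congr hφ pc_one (fun v hv => ⟨fun hs => absurd (h v hs) hv, fun hc => absurd hc (Set.notMem_empty v)⟩)

lemma pc_conj_of_compl_subset (hφ : IsPartialConj G w S φ) (h : (star G w)ᶜ ⊆ S) :
    φ = MulAut.conj ((gen G w)⁻¹) := by
  apply aut_ext
  intro v
  have hc : MulAut.conj ((gen G w)⁻¹) (gen G v) = (gen G w)⁻¹ * gen G v * gen G w := by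
    simp [MulAut.conj_apply]
  rw [hc]
  by_cases hst : v ∈ star G w
  · rw [pc_apply_star hφ hst, conj_star_eq hst]
  · exact pc_apply_mem hφ (h hst)

lemma pc_mul (hφ : IsPartialConj G w S φ) (hψ : IsPartialConj G w S' ψ)
    (h : Disjoint S S') : IsPartialConj G w (S ∪ S') (φ * ψ) := by
  constructor
  · intro v hv
    rcases hv with hv | hv
    · have hv' : v ∉ S' := fun hc => (Set.disjoint_left.mp h) hv hc
      show φ (ψ (gen G v)) = _
      rw [pc_apply_not_mem hψ hv', pc_apply_mem hφ hv]
    · show φ (ψ (gen G v)) = _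
      rw [pc_apply_mem hψ hv, map_mul, map_mul, map_inv, pc_apply_self hφ,
        pc_apply_not_mem hφ (fun hc => (Set.disjoint_left.mp h) hc hv)]
  · intro v hv
    rw [Set.mem_union] at hv
    push_neg at hv
    show φ (ψ (gen G v)) = _
    rw [pc_apply_not_mem hψ hv.2, pc_apply_not_mem hφ hv.1]

end PC

end RaagPaper

namespace RaagPaper

open scoped Classical

variable {V : Type} {G : SimpleGraph V}

lemma pc_exists (w : V) (S : Set V)
    (hS : ∀ a ∈ S, ∀ b, G.Adj a b → b ∉ S → b ∈ star G w) :
    ∃ φ : MulAut (Raag G), IsPartialConj G w S φ := by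
  classical
  set c : Raag G := gen G w with hc
  set f : V → Raag G := fun v => if v ∈ S then c⁻¹ * gen G v * c else gen G v with hf
  set f' : V → Raag G := fun v => if v ∈ S then c * gen G v * c⁻¹ else gen G v with hf'
  have hfS : ∀ v ∈ S, f v = c⁻¹ * gen G v * c := by
    intro v hv; show (if v ∈ S then c⁻¹ * gen G v * c else gen G v) = _; rw [if_pos hv]
  have hfN : ∀ v ∉ S, f v = gen G v := by
    intro v hv; show (if v ∈ S then c⁻¹ * gen G v * c else gen G v) = _; rw [if_neg hv]
  have hfS' : ∀ v ∈ S, f' v = c * gen G v * c⁻¹ := by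
    intro v hv; show (if v ∈ S then c * gen G v * c⁻¹ else gen G v) = _; rw [if_pos hv]
  have hfN' : ∀ v ∉ S, f' v = gen G v := by
    intro v hv; show (if v ∈ S then c * gen G v * c⁻¹ else gen G v) = _; rw [if_neg hv]
  have hcomm : ∀ u v : V, G.Adj u v → Commute (f u) (f v) := by
    intro u v huv
    have h0 : Commute (gen G u) (gen G v) := gen_comm huv
    by_cases hu : u ∈ S <;> by_cases hv : v ∈ S
    · rw [hfS u hu, hfS v hv]
      exact h0.map (MulAut.conj c⁻¹).toMonoidHom
    · rw [hfS u hu, hfN v hv]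
      have hvst : v ∈ star G w := hS u hu v huv hv
      have h1 : Commute c (gen G v) := gen_comm_star hvst
      exact ((h1.symm.inv_right).mul_right (h0.symm.mul_right h1.symm)).symm
    · rw [hfN u hu, hfS v hv]
      have hust : u ∈ star G w := hS v hv u huv.symm hu
      have h1 : Commute c (gen G u) := gen_comm_star hust
      exact (h1.symm.inv_right).mul_right (h0.mul_right h1.symm)
    · rw [hfN u hu, hfN v hv]
      exact h0
  have hcomm' : ∀ u v : V, G.Adj u v → Commute (f' u) (f' v) := by
    intro u v huv
    have h0 : Commute (gen G u) (gen G v) := gen_comm huv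
    by_cases hu : u ∈ S <;> by_cases hv : v ∈ S
    · rw [hfS' u hu, hfS' v hv]
      exact h0.map (MulAut.conj c).toMonoidHom
    · rw [hfS' u hu, hfN' v hv]
      have hvst : v ∈ star G w := hS u hu v huv hv
      have h1 : Commute c (gen G v) := gen_comm_star hvst
      exact (h1.symm.mul_right (h0.symm.mul_right h1.symm.inv_right)).symm
    · rw [hfN' u hu, hfS' v hv]
      have hust : u ∈ star G w := hS v hv u huv.symm hu
      have h1 : Commute c (gen G u) := gen_comm_star hust
      exact h1.symm.mul_right (h0.mul_right h1.symm.inv_right)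
    · rw [hfN' u hu, hfN' v hv]
      exact h0
  have hrel : ∀ r ∈ Rels G, FreeGroup.lift f r = 1 := by
    rintro r ⟨u, v, huv, rfl⟩
    simp only [map_mul, map_inv, FreeGroup.lift_apply_of]
    rw [(hcomm u v huv).eq]
    group
  have hrel' : ∀ r ∈ Rels G, FreeGroup.lift f' r = 1 := by
    rintro r ⟨u, v, huv, rfl⟩
    simp only [map_mul, map_inv, FreeGroup.lift_apply_of]
    rw [(hcomm' u v huv).eq]
    group
  set Φ : Raag G →* Raag G := PresentedGroup.toGroup hrel with hΦ
  set Ψ : Raag G →* Raag G := PresentedGroup.toGroup hrel' with hΨ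
  have hΦof : ∀ v : V, Φ (gen G v) = f v := fun v => PresentedGroup.toGroup.of hrel
  have hΨof : ∀ v : V, Ψ (gen G v) = f' v := fun v => PresentedGroup.toGroup.of hrel'
  have hΦc : Φ c = c := by
    rw [hc, hΦof w]
    by_cases hw : w ∈ S
    · rw [hfS w hw, hc]; group
    · exact hfN w hw
  have hΨc : Ψ c = c := by
    rw [hc, hΨof w]
    by_cases hw : w ∈ S
    · rw [hfS' w hw, hc]; group
    · exact hfN' w hw
  have h1 : Ψ.comp Φ = MonoidHom.id (Raag G) := by
    apply PresentedGroup.ext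
    intro v
    show Ψ (Φ (gen G v)) = gen G v
    rw [hΦof v]
    by_cases hv : v ∈ S
    · rw [hfS v hv, map_mul, map_mul, map_inv, hΨc, hΨof v, hfS' v hv]
      group
    · rw [hfN v hv, hΨof v, hfN' v hv]
  have h2 : Φ.comp Ψ = MonoidHom.id (Raag G) := by
    apply PresentedGroup.ext
    intro v
    show Φ (Ψ (gen G v)) = gen G v
    rw [hΨof v]
    by_cases hv : v ∈ S
    · rw [hfS' v hv, map_mul, map_mul, map_inv, hΦc, hΦof v, hfS v hv]
      group
    · rw [hfN' v hv, hΦof v, hfN v hv]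
  refine ⟨MonoidHom.toMulEquiv Φ Ψ h1 h2, ?_, ?_⟩
  · intro v hv
    show Φ (gen G v) = _
    rw [hΦof v, hfS v hv, hc]
  · intro v hv
    show Φ (gen G v) = _
    rw [hΦof v, hfN v hv]

end RaagPaper

namespace RaagPaper

variable {V : Type} {G : SimpleGraph V}

/-- Reachability within the induced subgraph on `S`. -/
def Reach (G : SimpleGraph V) (S : Set V) (a b : V) : Prop :=
  ∃ (ha : a ∈ S) (hb : b ∈ S), (G.induce S).Reachable ⟨a, ha⟩ ⟨b, hb⟩

lemma reach_refl {S : Set V} {a : V} (ha : a ∈ S) : Reach G S a a := ⟨ha, ha, by rfl⟩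

lemma reach_symm {S : Set V} {a b : V} (h : Reach G S a b) : Reach G S b a := by
  obtain ⟨ha, hb, h⟩ := h; exact ⟨hb, ha, h.symm⟩

lemma reach_trans {S : Set V} {a b c : V} (h1 : Reach G S a b) (h2 : Reach G S b c) :
    Reach G S a c := by
  obtain ⟨ha, hb, h1⟩ := h1; obtain ⟨hb', hc, h2⟩ := h2
  exact ⟨ha, hc, h1.trans h2⟩

lemma reach_adj {S : Set V} {a b : V} (ha : a ∈ S) (hb : b ∈ S) (h : G.Adj a b) :
    Reach G S a b := by
  refine ⟨ha, hb, SimpleGraph.Adj.reachable ?_⟩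
  simp [SimpleGraph.comap_adj, h]

lemma reach_ind {S : Set V} (P : V → Prop)
    (hP : ∀ a b, P a → a ∈ S → b ∈ S → G.Adj a b → P b)
    {a b : V} (hab : Reach G S a b) (ha : P a) : P b := by
  obtain ⟨haS, hbS, hr⟩ := hab
  obtain ⟨wlk⟩ := hr
  have : ∀ (u v : S) (_ : (G.induce S).Walk u v), P u.1 → P v.1 := by
    intro u v wk
    induction wk with
    | nil => exact id
    | cons h q ih =>
      rename_i c d e
      intro hPc
      refine ih (hP c.1 d.1 hPc c.2 d.2 ?_)
      simpa [SimpleGraph.comap_adj] using h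
  exact this _ _ wlk ha

section CC

variable {S C C' : Set V}

lemma cc_subset (hC : IsCC G S C) : C ⊆ S := by
  obtain ⟨v, rfl⟩ := hC
  rintro a ⟨ha, -⟩
  exact ha

lemma cc_reach_basept (hC : IsCC G S C) : ∃ v ∈ C, ∀ a, a ∈ C ↔ Reach G S a v := by
  obtain ⟨⟨v, hv⟩, rfl⟩ := hC
  refine ⟨v, ⟨hv, by rfl⟩, ?_⟩
  intro a
  constructor
  · rintro ⟨ha, hr⟩; exact ⟨ha, hv, hr⟩
  · rintro ⟨ha, hv', hr⟩; exact ⟨ha, hr⟩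

lemma cc_mem_of_reach (hC : IsCC G S C) {a b : V} (ha : a ∈ C) (h : Reach G S a b) :
    b ∈ C := by
  obtain ⟨v, hv, hiff⟩ := cc_reach_basept hC
  exact (hiff b).mpr (reach_trans (reach_symm h) ((hiff a).mp ha))

lemma cc_reach (hC : IsCC G S C) {a b : V} (ha : a ∈ C) (hb : b ∈ C) : Reach G S a b := by
  obtain ⟨v, hv, hiff⟩ := cc_reach_basept hC
  exact reach_trans ((hiff a).mp ha) (reach_symm ((hiff b).mp hb))

lemma cc_adj (hC : IsCC G S C) {a b : V} (ha : a ∈ C) (hb : b ∈ S) (h : G.Adj a b) :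
    b ∈ C :=
  cc_mem_of_reach hC ha (reach_adj (cc_subset hC ha) hb h)

lemma cc_exists {a : V} (ha : a ∈ S) : ∃ C, IsCC G S C ∧ a ∈ C :=
  ⟨_, ⟨⟨a, ha⟩, rfl⟩, ha, by rfl⟩

lemma cc_unique (hC : IsCC G S C) (hC' : IsCC G S C') {a : V} (ha : a ∈ C) (ha' : a ∈ C') :
    C = C' := by
  ext b
  constructor
  · intro hb; exact cc_mem_of_reach hC' ha' (cc_reach hC ha hb)
  · intro hb; exact cc_mem_of_reach hC ha (cc_reach hC' ha' hb)

end CC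

lemma dom_trans {a b c : V} (h1 : Dom G a b) (h2 : Dom G b c) : Dom G a c := by
  intro z hz
  have hzadj : G.Adj a z := hz
  have hz' : z ∈ star G b := h1 hz
  rcases mem_star_iff.mp hz' with rfl | hadj
  · -- b = z
    have ha : a ∈ star G c := h2 hzadj.symm
    rcases mem_star_iff.mp ha with rfl | hca
    · exact mem_star_iff.mpr (Or.inr hzadj)
    · have hc : c ∈ star G z := h1 hca.symm
      rcases mem_star_iff.mp hc with rfl | hzc
      · exact self_mem_star c
      · exact mem_star_iff.mpr (Or.inr hzc.symm)
  · exact h2 hadj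

end RaagPaper

namespace RaagPaper

variable {V : Type} {G : SimpleGraph V}

lemma star_comm {u v : V} : u ∈ star G v ↔ v ∈ star G u := by
  rw [mem_star_iff, mem_star_iff]
  constructor
  · rintro (rfl | h); exacts [Or.inl rfl, Or.inr h.symm]
  · rintro (rfl | h); exacts [Or.inl rfl, Or.inr h.symm]

lemma not_mem_compl_star {S : Set V} {a w : V} (h : a ∈ (star G w)ᶜ) : a ∉ star G w := h

/-- A SIL where the witness vertex `u` is isolated in the complement of the common link. -/
lemma no_sil_isolated (hnosil : HasNoSIL G) {a b u : V} (hab : a ≠ b) (hnadj : ¬G.Adj a b)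
    (hua : u ≠ a) (hub : u ≠ b) (h1 : ¬G.Adj a u) (h2 : ¬G.Adj b u)
    (hlk : ∀ q, G.Adj u q → G.Adj a q ∧ G.Adj b q) : False := by
  apply hnosil a b u
  refine ⟨hab, fun h => hua h.symm, fun h => hub h.symm, hnadj, h1, h2, ?_⟩
  intro C₀ hC₀ hu0
  have key : ∀ t, t ∈ C₀ → t = u := by
    intro t ht
    have hr : Reach G ((G.neighborSet a ∩ G.neighborSet b)ᶜ) u t := cc_reach hC₀ hu0 ht
    refine reach_ind (P := fun s => s = u) ?_ hr rfl
    rintro p q rfl hpS hqS hadj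
    exact absurd (hlk q hadj) hqS
  constructor
  · intro ha; exact hua (key a ha).symm
  · intro hb; exact hub (key b hb).symm

lemma claimK1 (hnosil : HasNoSIL G) {y w : V} (hyw : y ∉ star G w)
    {E' D' : Set V} (hE : IsCC G (star G y)ᶜ E') (hD : IsCC G (star G w)ᶜ D')
    (hwE : w ∉ E') (hyD : y ∉ D') {z : V} (hzE : z ∈ E') (hzD : z ∈ D') : False := by
  have hywne : y ≠ w := fun h => hyw (by rw [h]; exact self_mem_star w)
  have hnadj : ¬ G.Adj w y := fun h => hyw (adj_mem_star h)
  have hwy : w ∉ star G y := fun h => hyw (star_comm.mp h)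
  have hzy : z ∉ star G y := cc_subset hE hzE
  have hzw : z ∉ star G w := cc_subset hD hzD
  apply hnosil y w z
  refine ⟨hywne, fun h => hzy (by rw [← h]; exact self_mem_star y),
    fun h => hzw (by rw [← h]; exact self_mem_star w),
    fun h => hnadj h.symm, fun h => hzy (adj_mem_star h), fun h => hzw (adj_mem_star h), ?_⟩
  intro C₀ hC₀ hz0
  have aux : ∀ b, Reach G ((G.neighborSet y ∩ G.neighborSet w)ᶜ) z b → b ∈ E' ∧ b ∈ D' := by
    intro b hb
    refine reach_ind (P := fun t => t ∈ E' ∧ t ∈ D') ?_ hb ⟨hzE, hzD⟩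
    intro p q hp hpS hqS hadj
    have hqK : ¬ (G.Adj y q ∧ G.Adj w q) := by
      intro hk; exact hqS ⟨hk.1, hk.2⟩
    by_cases hqw : q ∈ star G w
    · rcases mem_star_iff.mp hqw with rfl | hadjwq
      · exact absurd (adj_mem_star hadj.symm) (cc_subset hD hp.2)
      · have hqy : q ∉ star G y := by
          rw [mem_star_iff]
          rintro (rfl | hadjyq)
          · exact hnadj hadjwq
          · exact hqK ⟨hadjyq, hadjwq⟩
        have hqE : q ∈ E' := cc_adj hE hp.1 hqy hadj
        have : w ∈ E' := cc_adj hE hqE hwy hadjwq.symm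
        exact absurd this hwE
    · by_cases hqy : q ∈ star G y
      · rcases mem_star_iff.mp hqy with rfl | hadjyq
        · exact absurd (adj_mem_star hadj.symm) (cc_subset hE hp.1)
        · have hqD : q ∈ D' := cc_adj hD hp.2 hqw hadj
          have : y ∈ D' := cc_adj hD hqD hyw hadjyq.symm
          exact absurd this hyD
      · exact ⟨cc_adj hE hp.1 hqy hadj, cc_adj hD hp.2 hqw hadj⟩
  constructor
  · intro hy0
    exact hyD (aux y (cc_reach hC₀ hz0 hy0)).2
  · intro hw0
    exact hwE (aux w (cc_reach hC₀ hz0 hw0)).1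

lemma claimK2 (hnosil : HasNoSIL G) {y w : V} (hyw : y ∉ star G w)
    {E' D' : Set V} (hE : IsCC G (star G y)ᶜ E') (hD : IsCC G (star G w)ᶜ D')
    (hwE : w ∉ E') (hyD : y ∈ D') : E' ⊆ D' := by
  have hwy : w ∉ star G y := fun h => hyw (star_comm.mp h)
  intro z hz
  have hzw : z ∉ star G w := by
    rw [mem_star_iff]
    rintro (rfl | hadj)
    · exact hwE hz
    · exact hwE (cc_adj hE hz hwy hadj.symm)
  obtain ⟨D'', hD'', hzD''⟩ := cc_exists (S := (star G w)ᶜ) hzw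
  by_cases hyD'' : y ∈ D''
  · rwa [cc_unique hD'' hD hyD'' hyD] at hzD''
  · exact (claimK1 hnosil hyw hE hD'' hwE hyD'' hz hzD'').elim

section UCC

variable {y : V} {E : Set V}

lemma ucc_subset (hE : IsUnionCC G y E) : E ⊆ (star G y)ᶜ := by
  obtain ⟨𝒞, h𝒞, rfl⟩ := hE
  rintro a ⟨C₀, hC₀, ha⟩
  exact cc_subset (h𝒞 C₀ hC₀) ha

lemma ucc_comp_subset (hE : IsUnionCC G y E) {D : Set V} (hD : IsCC G (star G y)ᶜ D)
    {a : V} (haE : a ∈ E) (haD : a ∈ D) : D ⊆ E := by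
  obtain ⟨𝒞, h𝒞, rfl⟩ := hE
  obtain ⟨C₀, hC₀, ha⟩ := haE
  rw [cc_unique hD (h𝒞 C₀ hC₀) haD ha]
  exact Set.subset_sUnion_of_mem hC₀

lemma ucc_adj (hE : IsUnionCC G y E) {a b : V} (ha : a ∈ E) (hadj : G.Adj a b)
    (hb : b ∉ star G y) : b ∈ E := by
  obtain ⟨D, hD, haD⟩ := cc_exists (S := (star G y)ᶜ) (ucc_subset hE ha)
  exact ucc_comp_subset hE hD ha haD (cc_adj hD haD hb hadj)

lemma ucc_hS (hE : IsUnionCC G y E) :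
    ∀ a ∈ E, ∀ b, G.Adj a b → b ∉ E → b ∈ star G y := by
  intro a ha b hadj hb
  by_contra hbs
  exact hb (ucc_adj hE ha hadj hbs)

lemma ucc_compl (hE : IsUnionCC G y E) : IsUnionCC G y ((star G y)ᶜ \ E) := by
  refine ⟨{D | IsCC G (star G y)ᶜ D ∧ D ⊆ (star G y)ᶜ \ E}, fun C₀ h => h.1, ?_⟩
  ext a
  constructor
  · rintro ⟨haS, haE⟩
    obtain ⟨D, hD, haD⟩ := cc_exists (S := (star G y)ᶜ) haS
    refine ⟨D, ⟨hD, ?_⟩, haD⟩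
    intro b hbD
    refine ⟨cc_subset hD hbD, ?_⟩
    intro hbE
    exact haE (ucc_comp_subset hE hD hbE hbD haD)
  · rintro ⟨D, ⟨hD, hsub⟩, haD⟩
    exact hsub haD

end UCC

end RaagPaper

namespace RaagPaper

variable {V : Type} {G : SimpleGraph V}

section XComp

variable {x w u v : V} {C : Set V}

lemma memC_not_star (hC : IsCC G (star G x)ᶜ C) {a : V} (ha : a ∈ C) :
    ¬ G.Adj x a ∧ a ≠ x := by
  have := cc_subset hC ha
  rw [Set.mem_compl_iff, mem_star_iff] at this
  push_neg at this
  exact ⟨this.2, this.1⟩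

lemma memC_compl (hC : IsCC G (star G x)ᶜ C) {a : V} (hax : a ≠ x) (hadj : ¬ G.Adj x a) :
    a ∈ ((star G x)ᶜ : Set V) := by
  rw [Set.mem_compl_iff, mem_star_iff]
  push_neg
  exact ⟨hax, hadj⟩

lemma comp_in_C (hC : IsCC G (star G x)ᶜ C) (hw : Dom G x w) {a : V}
    (ha : a ∈ C \ star G w) {D : Set V} (hD : IsCC G (star G w)ᶜ D) (haD : a ∈ D) :
    D ⊆ C \ star G w := by
  intro b hbD
  have hr : Reach G (star G w)ᶜ a b := cc_reach hD haD hbD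
  have hbC : b ∈ C := by
    refine reach_ind (P := fun t => t ∈ C) ?_ hr ha.1
    intro p q hp hpS hqS hadj
    have hq : q ∉ star G x := by
      rw [mem_star_iff]
      rintro (rfl | hadjxq)
      · exact hpS (hw hadj.symm)
      · exact hqS (hw hadjxq)
    exact cc_adj hC hp hq hadj
  exact ⟨hbC, cc_subset hD hbD⟩

/-- F4 : `C \ st(w)` is a union of `w`-components when `w` dominates `x`. -/
lemma isUnionCC_C_diff (hC : IsCC G (star G x)ᶜ C) (hw : Dom G x w) :
    IsUnionCC G w (C \ star G w) := by
  refine ⟨{D | IsCC G (star G w)ᶜ D ∧ D ⊆ C \ star G w}, fun D h => h.1, ?_⟩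
  ext a
  constructor
  · intro ha
    obtain ⟨D, hD, haD⟩ := cc_exists (S := (star G w)ᶜ) ha.2
    exact ⟨D, ⟨hD, comp_in_C hC hw ha hD haD⟩, haD⟩
  · rintro ⟨D, ⟨hD, hsub⟩, haD⟩
    exact hsub haD

/-- F5' : if `x ≤ v` and `v ∈ C`, then everything outside `st(v)` other than `x` is in `C`. -/
lemma claimF5 (hnosil : HasNoSIL G) (hC : IsCC G (star G x)ᶜ C) (hxv : Dom G x v)
    (hvC : v ∈ C) {z : V} (hzv : z ∉ star G v) (hzx : z ≠ x) : z ∈ C := by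
  obtain ⟨hxvadj, hvnex⟩ := memC_not_star hC hvC
  have hlkv : ∀ q, G.Adj x q → G.Adj v q := by
    intro q hq
    rcases mem_star_iff.mp (hxv hq) with rfl | h
    · exact absurd hq hxvadj
    · exact h
  have hxz : ¬ G.Adj x z := fun h => hzv (adj_mem_star (hlkv z h))
  have hzS : z ∈ ((star G x)ᶜ : Set V) := memC_compl hC hzx hxz
  by_contra hzC
  obtain ⟨C', hC', hzC'⟩ := cc_exists (G := G) (S := (star G x)ᶜ) hzS
  have hvC' : v ∉ C' := by
    intro hv
    exact hzC (cc_unique hC' hC hv hvC ▸ hzC')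
  -- build the SIL (v, x | z)
  apply hnosil v x z
  have hvz : ¬ G.Adj v z := fun h => hzv (adj_mem_star h)
  have hvnez : v ≠ z := fun h => hzv (by rw [← h]; exact self_mem_star v)
  refine ⟨hvnex, hvnez, fun h => hzx h.symm, fun h => hxvadj h.symm, hvz, hxz, ?_⟩
  intro C₀ hC₀ hz0
  constructor
  · -- v ∉ C₀
    intro hv0
    have hr : Reach G ((G.neighborSet v ∩ G.neighborSet x)ᶜ) z v := cc_reach hC₀ hz0 hv0
    have : v ∈ C' := by
      refine reach_ind (P := fun t => t ∈ C') ?_ hr hzC'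
      intro p q hp hpS hqS hadj
      have hq : q ∉ star G x := by
        rw [mem_star_iff]
        rintro (rfl | hadjxq)
        · exact hpS ⟨hlkv p hadj.symm, hadj.symm⟩
        · exact hqS ⟨hlkv q hadjxq, hadjxq⟩
      exact cc_adj hC' hp hq hadj
    exact hvC' this
  · -- x ∉ C₀ : x is isolated in the complement of lk(v) ∩ lk(x)
    intro hx0
    have hr : Reach G ((G.neighborSet v ∩ G.neighborSet x)ᶜ) x z := cc_reach hC₀ hx0 hz0
    have : z = x := by
      refine reach_ind (P := fun t => t = x) ?_ hr rfl
      rintro p q rfl hpS hqS hadj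
      exact absurd ⟨hlkv q hadj, hadj⟩ hqS
    exact hzx this

lemma claimB1 (hnosil : HasNoSIL G) (hC : IsCC G (star G x)ᶜ C) (hxw : Dom G x w)
    (huv : Dom G u v) (hune : u ≠ v) (hunw : u ≠ w) (hvC : v ∈ C) (hvw : v ∉ star G w) :
    u ∈ C \ star G w := by
  obtain ⟨hxvadj, hvnex⟩ := memC_not_star hC hvC
  have hvwadj : ¬ G.Adj w v := fun h => hvw (adj_mem_star h)
  have hvnew : v ≠ w := fun h => hvw (by rw [h]; exact self_mem_star w)
  have hxu : ¬ G.Adj x u := by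
    intro h
    rcases mem_star_iff.mp (huv h.symm) with rfl | h'
    · exact hvnex rfl
    · exact hxvadj h'.symm
  -- key sub-fact: if u ∈ C then u ∉ star G w
  have hCdone : u ∈ C → u ∈ C \ star G w := by
    intro huC
    refine ⟨huC, ?_⟩
    rw [mem_star_iff]
    rintro (rfl | hadjwu)
    · exact hunw rfl
    · rcases mem_star_iff.mp (huv hadjwu.symm) with rfl | h'
      · exact hvnew rfl
      · exact hvw (adj_mem_star h'.symm)
  by_cases hux : u = x
  · -- u = x : SIL (v, w | x)
    subst hux
    have hxw_adj : ¬ G.Adj u w := by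
      intro h
      rcases mem_star_iff.mp (huv h) with rfl | h'
      · exact hvnew rfl
      · exact hvw (adj_mem_star h'.symm)
    exfalso
    refine no_sil_isolated hnosil hvnew (fun h => hvwadj h.symm) hune hunw
      (fun h => hxvadj h.symm) (fun h => hxw_adj h.symm) ?_
    intro q hq
    constructor
    · rcases mem_star_iff.mp (huv hq) with rfl | h'
      · exact absurd hq.symm (fun h => hxvadj h.symm)
      · exact h'
    · rcases mem_star_iff.mp (hxw hq) with rfl | h'
      · exact absurd hq hxw_adj
      · exact h'
  · -- u ≠ x
    have huS : u ∈ ((star G x)ᶜ : Set V) := memC_compl hC hux hxu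
    by_cases huC : u ∈ C
    · exact hCdone huC
    by_cases hadjuv : G.Adj u v
    · exact absurd (cc_adj hC hvC huS hadjuv.symm) huC
    obtain ⟨C'', hC'', huC''⟩ := cc_exists (G := G) (S := (star G x)ᶜ) huS
    have hlkuv : ∀ q, G.Adj u q → G.Adj v q := by
      intro q hq
      rcases mem_star_iff.mp (huv hq) with rfl | h'
      · exact absurd hq hadjuv
      · exact h'
    have hlkux : ∀ q, G.Adj u q → G.Adj x q := by
      intro q hq
      by_cases hqx : q = x
      · exact absurd (hqx ▸ hq) (fun h => hxu h.symm)
      by_cases hadjxq : G.Adj x q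
      · exact hadjxq
      · exfalso
        have hqS : q ∈ ((star G x)ᶜ : Set V) := memC_compl hC hqx hadjxq
        have hqC : q ∈ C := cc_adj hC hvC hqS (hlkuv q hq)
        have hqC'' : q ∈ C'' := cc_adj hC'' huC'' hqS hq
        exact huC ((cc_unique hC'' hC hqC'' hqC) ▸ huC'')
    exfalso
    refine no_sil_isolated hnosil (fun h => hvnex h.symm) hxvadj hux hune hxu
      (fun h => hadjuv h.symm) ?_
    intro q hq
    exact ⟨hlkux q hq, hlkuv q hq⟩

lemma claimB2 (hnosil : HasNoSIL G) (hC : IsCC G (star G x)ᶜ C) (hxw : Dom G x w)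
    (hu : u ∈ C \ star G w) (huv : Dom G u v) (hune : u ≠ v) (hvst : v ∉ star G w) :
    v ∈ C := by
  obtain ⟨hxuadj, hunex⟩ := memC_not_star hC hu.1
  have huw : ¬ G.Adj w u := fun h => hu.2 (adj_mem_star h)
  have hunw : u ≠ w := fun h => hu.2 (by rw [h]; exact self_mem_star w)
  have hxv : ¬ G.Adj x v := by
    intro h
    exact hvst (hxw h)
  by_cases hadjuv : G.Adj u v
  · -- v adjacent to u ∈ C, and v ∉ star x, so v ∈ C
    have hvnex : v ≠ x := by
      rintro rfl
      exact hxuadj hadjuv.symm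
    exact cc_adj hC hu.1 (memC_compl hC hvnex hxv) hadjuv
  · have hlkuv : ∀ q, G.Adj u q → G.Adj v q := by
      intro q hq
      rcases mem_star_iff.mp (huv hq) with rfl | h'
      · exact absurd hq hadjuv
      · exact h'
    by_cases hvx : v = x
    · -- v = x : SIL (x, w | u)
      subst hvx
      exfalso
      have hxnw : v ≠ w := fun h => hvst (by rw [h]; exact self_mem_star w)
      have hxwadj : ¬ G.Adj v w := fun h => hvst (adj_mem_star h.symm)
      refine no_sil_isolated hnosil hxnw hxwadj (fun h => hunex h) hunw
        (fun h => hadjuv h.symm) huw ?_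
      intro q hq
      have h1 : G.Adj v q := hlkuv q hq
      constructor
      · exact h1
      · rcases mem_star_iff.mp (hxw h1) with rfl | h'
        · exact absurd hq.symm huw
        · exact h'
    · -- v ≠ x
      by_contra hvC
      have hvS : v ∈ ((star G x)ᶜ : Set V) := memC_compl hC hvx hxv
      obtain ⟨C', hC', hvC'⟩ := cc_exists (G := G) (S := (star G x)ᶜ) hvS
      have hlkux : ∀ q, G.Adj u q → G.Adj x q := by
        intro q hq
        by_cases hqx : q = x
        · exact absurd (hqx ▸ hq) (fun h => hxuadj h.symm)
        by_cases hadjxq : G.Adj x q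
        · exact hadjxq
        · exfalso
          have hqS : q ∈ ((star G x)ᶜ : Set V) := memC_compl hC hqx hadjxq
          have hqC : q ∈ C := cc_adj hC hu.1 hqS hq
          have hqC' : q ∈ C' := cc_adj hC' hvC' hqS (hlkuv q hq)
          exact hvC ((cc_unique hC' hC hqC' hqC) ▸ hvC')
      refine no_sil_isolated hnosil (fun h => hvx h.symm) hxv (fun h => hunex h) hune
        (fun h => hxuadj h) (fun h => hadjuv h.symm) ?_
      intro q hq
      exact ⟨hlkux q hq, hlkuv q hq⟩

/-- With no SIL: `E` a union of `y`-components avoiding `w`, `D` a union of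
`w`-components containing `y`, `y ∉ st(w)`: then `E ⊆ D`. -/
lemma unionE_subset (hnosil : HasNoSIL G) {y w : V} (hyw : y ∉ star G w)
    {E D : Set V} (hE : IsUnionCC G y E) (hwE : w ∉ E) (hD : IsUnionCC G w D)
    (hyD : y ∈ D) : E ⊆ D := by
  intro z hz
  obtain ⟨E', hE', hzE'⟩ := cc_exists (G := G) (S := (star G y)ᶜ) (ucc_subset hE hz)
  obtain ⟨D', hD', hyD'⟩ := cc_exists (G := G) (S := (star G w)ᶜ) (ucc_subset hD hyD)
  have hwE' : w ∉ E' := fun h => hwE (ucc_comp_subset hE hE' hz hzE' h)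
  have := claimK2 hnosil hyw hE' hD' hwE' hyD'
  exact ucc_comp_subset hD hD' hyD hyD' (this hzE')

lemma unionE_disjoint (hnosil : HasNoSIL G) {y w : V} (hyw : y ∉ star G w)
    {E D : Set V} (hE : IsUnionCC G y E) (hwE : w ∉ E) (hD : IsUnionCC G w D)
    (hyD : y ∉ D) {z : V} (hzE : z ∈ E) (hzD : z ∈ D) : False := by
  obtain ⟨E', hE', hzE'⟩ := cc_exists (G := G) (S := (star G y)ᶜ) (ucc_subset hE hzE)
  obtain ⟨D', hD', hzD'⟩ := cc_exists (G := G) (S := (star G w)ᶜ) (ucc_subset hD hzD)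
  have hwE' : w ∉ E' := fun h => hwE (ucc_comp_subset hE hE' hzE hzE' h)
  have hyD' : y ∉ D' := fun h => hyD (ucc_comp_subset hD hD' hzD hzD' h)
  exact claimK1 hnosil hyw hE' hD' hwE' hyD' hzE' hzD'

end XComp

end RaagPaper

namespace RaagPaper

variable {V : Type} {G : SimpleGraph V}

lemma aut_inv_eq {φ : MulAut (Raag G)} {a b : Raag G} (h : φ b = a) : φ⁻¹ a = b := by
  rw [← h]
  exact φ.symm_apply_apply b

section TV

variable {u v z : V} {t : MulAut (Raag G)}

lemma tv_apply_u (ht : IsTransvection G u v t) : t (gen G u) = gen G u * gen G v := ht.1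

lemma tv_apply_ne (ht : IsTransvection G u v t) (h : z ≠ u) : t (gen G z) = gen G z :=
  ht.2 z h

lemma tv_inv_ne (ht : IsTransvection G u v t) (h : z ≠ u) : t⁻¹ (gen G z) = gen G z :=
  aut_inv_eq (ht.2 z h)

lemma tv_inv_u (ht : IsTransvection G u v t) (hvu : v ≠ u) :
    t⁻¹ (gen G u) = gen G u * (gen G v)⁻¹ := by
  refine aut_inv_eq ?_
  rw [map_mul, map_inv, ht.1, ht.2 v hvu]
  group

end TV

section PCinv

variable {w z : V} {S : Set V} {φ : MulAut (Raag G)}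

lemma pc_inv_mem (hφ : IsPartialConj G w S φ) (hz : z ∈ S) :
    φ⁻¹ (gen G z) = gen G w * gen G z * (gen G w)⁻¹ := by
  refine aut_inv_eq ?_
  rw [map_mul, map_mul, map_inv, pc_apply_self hφ, pc_apply_mem hφ hz]
  group

lemma pc_inv_not_mem (hφ : IsPartialConj G w S φ) (hz : z ∉ S) :
    φ⁻¹ (gen G z) = gen G z :=
  aut_inv_eq (pc_apply_not_mem hφ hz)

end PCinv

lemma conj_conj_comm {a b z : Raag G} (h : Commute a b) :
    a⁻¹ * (b⁻¹ * z * b) * a = b⁻¹ * (a⁻¹ * z * a) * b := by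
  have h1 := h.inv_inv.eq
  have h2 := h.eq
  simp only [mul_assoc]
  rw [← h2]
  simp only [← mul_assoc]
  rw [h1]

/-- Master commutation lemma for two partial conjugations. -/
lemma pc_pc_comm {y w : V} {E D : Set V} {t p : MulAut (Raag G)}
    (hT : IsPartialConj G y E t) (hp : IsPartialConj G w D p)
    (hwE : w ∉ E)
    (hcase : (y ∈ star G w ∧ y ∉ D) ∨ ((∀ z, z ∈ E → z ∈ D → False) ∧ y ∉ D) ∨
      (E ⊆ D ∧ y ∈ D ∧ y ∉ E)) :
    t * p = p * t := by
  apply aut_ext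
  intro z
  rw [MulAut.mul_apply, MulAut.mul_apply]
  by_cases hzD : z ∈ D <;> by_cases hzE : z ∈ E
  · -- z ∈ D ∩ E
    rcases hcase with ⟨hstar, hyD⟩ | ⟨hdisj, hyD⟩ | ⟨hsub, hyD, hyE⟩
    · simp only [pc_apply_mem hp hzD, pc_apply_mem hT hzE, map_mul, map_inv,
        pc_apply_not_mem hT hwE, pc_apply_not_mem hp hyD]
      have hc : Commute (gen G y) (gen G w) := (gen_comm_star hstar).symm
      have h2 := conj_conj_comm (z := gen G z) hc
      group at h2 ⊢
      exact h2.symm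
    · exact absurd hzD (fun h => hdisj z hzE h)
    · simp only [pc_apply_mem hp hzD, pc_apply_mem hT hzE, map_mul, map_inv,
        pc_apply_not_mem hT hwE, pc_apply_mem hp hyD]
      group
  · -- z ∈ D \ E
    simp only [pc_apply_mem hp hzD, pc_apply_not_mem hT hzE, map_mul, map_inv,
      pc_apply_not_mem hT hwE]
  · -- z ∈ E \ D
    rcases hcase with ⟨hstar, hyD⟩ | ⟨hdisj, hyD⟩ | ⟨hsub, hyD, hyE⟩
    · simp only [pc_apply_not_mem hp hzD, pc_apply_mem hT hzE, map_mul, map_inv,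
        pc_apply_not_mem hp hyD]
    · simp only [pc_apply_not_mem hp hzD, pc_apply_mem hT hzE, map_mul, map_inv,
        pc_apply_not_mem hp hyD]
    · exact absurd (hsub hzE) hzD
  · simp only [pc_apply_not_mem hp hzD, pc_apply_not_mem hT hzE]

end RaagPaper

namespace RaagPaper

variable {V : Type} {G : SimpleGraph V}

/-- Transvection `R_u^v` commutes with a partial conjugation `π^w` in the good cases
(when `w ≠ u`). -/
lemma tv_pc_comm {u v w : V} {D : Set V} {t p : MulAut (Raag G)}
    (ht : IsTransvection G u v t) (hp : IsPartialConj G w D p)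
    (hwu : w ≠ u)
    (hcase : (u ∈ D ∧ v ∈ D) ∨ (u ∉ D ∧ v ∉ D) ∨ (u ∈ D ∧ v ∈ star G w)) :
    t * p = p * t := by
  apply aut_ext
  intro z
  rw [MulAut.mul_apply, MulAut.mul_apply]
  by_cases hzu : z = u
  · subst hzu
    rcases hcase with ⟨huD, hvD⟩ | ⟨huD, hvD⟩ | ⟨huD, hvst⟩
    · simp only [tv_apply_u ht, pc_apply_mem hp huD, pc_apply_mem hp hvD, map_mul,
        map_inv, tv_apply_ne ht hwu]
      group
    · simp only [tv_apply_u ht, pc_apply_not_mem hp huD, pc_apply_not_mem hp hvD, map_mul]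
    · simp only [tv_apply_u ht, pc_apply_mem hp huD, pc_apply_star hp hvst, map_mul,
        map_inv, tv_apply_ne ht hwu]
      have hc := (gen_comm_star hvst).eq
      simp only [mul_assoc]
      rw [hc]
  · by_cases hzD : z ∈ D
    · simp only [pc_apply_mem hp hzD, map_mul, map_inv, tv_apply_ne ht hwu,
        tv_apply_ne ht hzu]
    · simp only [pc_apply_not_mem hp hzD, tv_apply_ne ht hzu]

/-- `R_u^v` always commutes with any partial conjugation by `v` itself. -/
lemma tv_pcv_comm {u v : V} {S : Set V} {t q : MulAut (Raag G)}
    (ht : IsTransvection G u v t) (hq : IsPartialConj G v S q) (hvu : v ≠ u) :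
    t * q = q * t := by
  apply aut_ext
  intro z
  rw [MulAut.mul_apply, MulAut.mul_apply]
  by_cases hzu : z = u
  · subst hzu
    by_cases hzS : z ∈ S
    · simp only [tv_apply_u ht, pc_apply_mem hq hzS, map_mul, map_inv,
        tv_apply_ne ht hvu, pc_apply_self hq]
      group
    · simp only [tv_apply_u ht, pc_apply_not_mem hq hzS, map_mul, pc_apply_self hq]
  · by_cases hzS : z ∈ S
    · simp only [pc_apply_mem hq hzS, map_mul, map_inv, tv_apply_ne ht hvu,
        tv_apply_ne ht hzu]
    · simp only [pc_apply_not_mem hq hzS, tv_apply_ne ht hzu]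

/-- Identity `R_u^v ∘ π^u_D = π^u_D ∘ π^v_D ∘ R_u^v` when `u, v ∉ D`. -/
lemma tv_pc_u_eq1 {u v : V} {D : Set V} {t p q : MulAut (Raag G)}
    (ht : IsTransvection G u v t) (hp : IsPartialConj G u D p)
    (hq : IsPartialConj G v D q) (hvu : v ≠ u) (huD : u ∉ D) (hvD : v ∉ D) :
    t * p = p * q * t := by
  apply aut_ext
  intro z
  rw [MulAut.mul_apply, MulAut.mul_apply, MulAut.mul_apply]
  by_cases hzu : z = u
  · subst hzu
    simp only [pc_apply_not_mem hp huD, tv_apply_u ht, map_mul,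
      pc_apply_not_mem hq huD, pc_apply_not_mem hq hvD, pc_apply_not_mem hp hvD]
  · by_cases hzD : z ∈ D
    · simp only [pc_apply_mem hp hzD, map_mul, map_inv, tv_apply_u ht,
        tv_apply_ne ht hzu, pc_apply_mem hq hzD, pc_apply_not_mem hq huD,
        pc_apply_not_mem hp hvD, pc_apply_mem hp hzD, pc_apply_not_mem hp huD]
      group
    · simp only [pc_apply_not_mem hp hzD, tv_apply_ne ht hzu, pc_apply_not_mem hq hzD]

/-- Identity `R_u^v ∘ π^u_D = π^v_{D ∪ {u}} ∘ π^u_D ∘ R_u^v` when `u ∉ D`, `v ∈ D`. -/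
lemma tv_pc_u_eq2 {u v : V} {D : Set V} {t p q : MulAut (Raag G)}
    (ht : IsTransvection G u v t) (hp : IsPartialConj G u D p)
    (hq : IsPartialConj G v (D ∪ {u}) q) (hvu : v ≠ u) (huD : u ∉ D) (hvD : v ∈ D) :
    t * p = q * p * t := by
  have huDu : u ∈ D ∪ {u} := Set.mem_union_right _ rfl
  have hvDu : v ∈ D ∪ {u} := Set.mem_union_left _ hvD
  apply aut_ext
  intro z
  rw [MulAut.mul_apply, MulAut.mul_apply, MulAut.mul_apply]
  by_cases hzu : z = u
  · subst hzu
    simp only [pc_apply_not_mem hp huD, tv_apply_u ht, map_mul, map_inv,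
      pc_apply_mem hp hvD, pc_apply_mem hq huDu, pc_apply_mem hq hvDu,
      pc_apply_not_mem hp huD]
    group
  · by_cases hzD : z ∈ D
    · have hzDu : z ∈ D ∪ {u} := Set.mem_union_left _ hzD
      simp only [pc_apply_mem hp hzD, map_mul, map_inv, tv_apply_u ht,
        tv_apply_ne ht hzu, pc_apply_mem hq hzDu, pc_apply_mem hq huDu]
      group
    · have hzDu : z ∉ D ∪ {u} := by
        rw [Set.mem_union]
        rintro (h | h)
        · exact hzD h
        · exact hzu h
      simp only [pc_apply_not_mem hp hzD, tv_apply_ne ht hzu, pc_apply_not_mem hq hzDu]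

/-- Two complementary partial conjugations by `y` are inverse in `Out`. -/
lemma pc_compl_inv {y : V} {E E₂ : Set V} {φ ψ : MulAut (Raag G)}
    (hφ : IsPartialConj G y E φ) (hψ : IsPartialConj G y E₂ ψ)
    (hdisj : ∀ z, z ∈ E → z ∈ E₂ → False)
    (hcover : ∀ z, z ∉ star G y → z ∈ E ∨ z ∈ E₂) :
    toOut (Raag G) φ * toOut (Raag G) ψ = 1 := by
  have hd : Disjoint E E₂ := Set.disjoint_left.mpr (fun {z} hz hz2 => hdisj z hz hz2)
  have hm := pc_mul hφ hψ hd
  have hc := pc_conj_of_compl_subset hm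
    (fun z hz => (hcover z hz).elim (Set.mem_union_left _) (Set.mem_union_right _))
  rw [← map_mul, hc, toOut_conj]

end RaagPaper

namespace RaagPaper

variable {V : Type} {G : SimpleGraph V}

lemma claimB3 (hnosil : HasNoSIL G) {x u v : V} {C : Set V}
    (hC : IsCC G (star G x)ᶜ C) (huv : Dom G u v) (hune : u ≠ v) (hvC : v ∈ C)
    (hvu : v ∉ star G u) (huC : u ∉ C) (hux : u ≠ x) : False := by
  obtain ⟨hxvadj, hvnex⟩ := memC_not_star hC hvC
  have hadjuv : ¬ G.Adj u v := fun h => hvu (adj_mem_star h)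
  have hxu : ¬ G.Adj x u := by
    intro h
    rcases mem_star_iff.mp (huv h.symm) with rfl | h'
    · exact hvnex rfl
    · exact hxvadj h'.symm
  have huS : u ∈ ((star G x)ᶜ : Set V) := memC_compl hC hux hxu
  obtain ⟨C'', hC'', huC''⟩ := cc_exists (G := G) (S := (star G x)ᶜ) huS
  have hlkuv : ∀ q, G.Adj u q → G.Adj v q := by
    intro q hq
    rcases mem_star_iff.mp (huv hq) with rfl | h'
    · exact absurd hq hadjuv
    · exact h'
  have hlkux : ∀ q, G.Adj u q → G.Adj x q := by
    intro q hq
    by_cases hqx : q = x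
    · exact absurd (hqx ▸ hq) (fun h => hxu h.symm)
    by_cases hadjxq : G.Adj x q
    · exact hadjxq
    · exfalso
      have hqS : q ∈ ((star G x)ᶜ : Set V) := memC_compl hC hqx hadjxq
      have hqC : q ∈ C := cc_adj hC hvC hqS (hlkuv q hq)
      have hqC'' : q ∈ C'' := cc_adj hC'' huC'' hqS hq
      exact huC ((cc_unique hC'' hC hqC'' hqC) ▸ huC'')
  exact no_sil_isolated hnosil (fun h => hvnex h.symm) hxvadj hux hune hxu
    (fun h => hadjuv h.symm) (fun q hq => ⟨hlkux q hq, hlkuv q hq⟩)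

lemma claimB4 (hnosil : HasNoSIL G) {x u v : V} {C : Set V}
    (hC : IsCC G (star G x)ᶜ C) (hxu : Dom G x u) (huv : Dom G u v) (hune : u ≠ v)
    (huC : u ∈ C) (hvu : v ∉ star G u) (hvnC : v ∉ C) : C \ star G u = ∅ := by
  obtain ⟨hxuadj, hunex⟩ := memC_not_star hC huC
  have hadjuv : ¬ G.Adj u v := fun h => hvu (adj_mem_star h)
  by_cases hvx : v = x
  · -- v = x : all neighbours of u lie in lk(x), so C = {u}
    subst hvx
    have hlkux : ∀ q, G.Adj u q → G.Adj v q := by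
      intro q hq
      rcases mem_star_iff.mp (huv hq) with rfl | h'
      · exact absurd hq.symm hxuadj
      · exact h'
    ext z
    simp only [Set.mem_diff, Set.mem_empty_iff_false, iff_false]
    rintro ⟨hzC, hzu⟩
    have hr : Reach G (star G v)ᶜ u z := cc_reach hC huC hzC
    have hz : z = u := by
      refine reach_ind (P := fun t => t = u) ?_ hr rfl
      rintro p q rfl hpS hqS hadj
      exact absurd (adj_mem_star (hlkux q hadj)) hqS
    exact hzu (by rw [hz]; exact self_mem_star u)
  · -- v ≠ x : SIL contradiction
    exfalso
    have hxv : ¬ G.Adj x v := by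
      intro h
      exact hvu (hxu h)
    have hvS : v ∈ ((star G x)ᶜ : Set V) := memC_compl hC hvx hxv
    obtain ⟨C', hC', hvC'⟩ := cc_exists (G := G) (S := (star G x)ᶜ) hvS
    have hlkuv : ∀ q, G.Adj u q → G.Adj v q := by
      intro q hq
      rcases mem_star_iff.mp (huv hq) with rfl | h'
      · exact absurd hq hadjuv
      · exact h'
    have hlkux : ∀ q, G.Adj u q → G.Adj x q := by
      intro q hq
      by_cases hqx : q = x
      · exact absurd (hqx ▸ hq) (fun h => hxuadj h.symm)
      by_cases hadjxq : G.Adj x q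
      · exact hadjxq
      · exfalso
        have hqS : q ∈ ((star G x)ᶜ : Set V) := memC_compl hC hqx hadjxq
        have hqC : q ∈ C := cc_adj hC huC hqS hq
        have hqC' : q ∈ C' := cc_adj hC' hvC' hqS (hlkuv q hq)
        exact hvnC ((cc_unique hC' hC hqC' hqC) ▸ hvC')
    exact no_sil_isolated hnosil (fun h => hvx h.symm) hxv hunex hune hxuadj
      (fun h => hadjuv h.symm) (fun q hq => ⟨hlkux q hq, hlkuv q hq⟩)

end RaagPaper

namespace RaagPaper

section OutAlg

variable {Γ : Type*} [Group Γ] {T P Q : Γ}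

lemma conj_of_comm (h : T * P = P * T) : T * P * T⁻¹ = P := by
  rw [h]; group

lemma conj_of_comm' (h : T * P = P * T) : T⁻¹ * P * T = P := by
  have h2 : P * T = T * P := h.symm
  calc T⁻¹ * P * T = T⁻¹ * (P * T) := by group
    _ = T⁻¹ * (T * P) := by rw [h2]
    _ = P := by group

lemma rel_conj1 (h : T * P = Q * P * T) : T * P * T⁻¹ = Q * P := by
  rw [h]; group

lemma rel_conj1' (h : T * P = Q * P * T) (hc : T * Q = Q * T) :
    T⁻¹ * P * T = Q⁻¹ * P := by
  have hcc : Commute T Q := hc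
  have h3 : T⁻¹ * Q⁻¹ = Q⁻¹ * T⁻¹ := (hcc.inv_left.inv_right).eq
  have h2 : P * T = Q⁻¹ * (T * P) := by rw [h]; group
  calc T⁻¹ * P * T = T⁻¹ * (P * T) := by group
    _ = T⁻¹ * (Q⁻¹ * (T * P)) := by rw [h2]
    _ = T⁻¹ * Q⁻¹ * T * P := by group
    _ = Q⁻¹ * T⁻¹ * T * P := by rw [h3]
    _ = Q⁻¹ * P := by group

lemma rel_conj2 (h : T * P = P * Q * T) : T * P * T⁻¹ = P * Q := by
  rw [h]; group

lemma rel_conj2' (h : T * P = P * Q * T) (hc : T * Q = Q * T) :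
    T⁻¹ * P * T = P * Q⁻¹ := by
  have hq : T⁻¹ * Q * T = Q := conj_of_comm' hc
  have h6 : T⁻¹ * (P * Q) * T = P := by rw [← rel_conj2 h]; group
  have h5 : (T⁻¹ * P * T) * (T⁻¹ * Q * T) = T⁻¹ * (P * Q) * T := by group
  rw [hq, h6] at h5
  calc T⁻¹ * P * T = (T⁻¹ * P * T) * Q * Q⁻¹ := by group
    _ = P * Q⁻¹ := by rw [h5]

end OutAlg

end RaagPaper

namespace RaagPaper

variable {V : Type} {G : SimpleGraph V}

lemma key_step (hnosil : HasNoSIL G) {x : V} {X C : Set V} (hxX : x ∈ X)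
    (hC : IsCC G (star G x)ᶜ C) (tA : MulAut (Raag G))
    (htype : (∃ u v, u ≠ v ∧ Dom G u v ∧ IsTransvection G u v tA) ∨
      (∃ y E, IsUnionCC G y E ∧ IsPartialConj G y E tA))
    {w : V} {p : MulAut (Raag G)} (hdom : ∀ x' ∈ X, Dom G x' w)
    (hp : IsPartialConj G w (C \ star G w) p) :
    toOut (Raag G) tA * toOut (Raag G) p * (toOut (Raag G) tA)⁻¹ ∈
      Subgroup.closure (PXC G X C) ∧
    (toOut (Raag G) tA)⁻¹ * toOut (Raag G) p * toOut (Raag G) tA ∈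
      Subgroup.closure (PXC G X C) := by
  classical
  set H := Subgroup.closure (PXC G X C) with hHdef
  set T := toOut (Raag G) tA with hTdef
  set P := toOut (Raag G) p with hPdef
  have hPH : P ∈ H := Subgroup.subset_closure ⟨w, p, hdom, hp, rfl⟩
  have hxw : Dom G x w := hdom x hxX
  have done_of_comm : tA * p = p * tA → (T * P * T⁻¹ ∈ H ∧ T⁻¹ * P * T ∈ H) := by
    intro hrel
    have hO : T * P = P * T := by
      have := congrArg (toOut (Raag G)) hrel
      simpa only [map_mul] using this
    rw [conj_of_comm hO, conj_of_comm' hO]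
    exact ⟨hPH, hPH⟩
  rcases htype with ⟨u, v, hne, hduv, ht⟩ | ⟨y, E, hE, hT⟩
  · -- transvection generator R_u^v
    have hvu : v ≠ u := hne.symm
    by_cases hwu : w = u
    · subst hwu
      have hxv : Dom G x v := dom_trans hxw hduv
      have hdomv : ∀ x' ∈ X, Dom G x' v := fun x' hx' => dom_trans (hdom x' hx') hduv
      have hq'ex : ∃ q', IsPartialConj G v (C \ star G v) q' := by
        apply pc_exists
        intro a ha b hadj hb
        by_cases hbC : b ∈ C
        · by_contra hbs
          exact hb ⟨hbC, hbs⟩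
        · have hbx : b ≠ x := by
            rintro rfl
            exact (memC_not_star hC ha.1).1 hadj.symm
          by_cases hbsx : b ∈ star G x
          · rcases mem_star_iff.mp hbsx with rfl | hadjxb
            · exact absurd rfl hbx
            · exact hxv hadjxb
          · exact absurd (cc_adj hC ha.1 hbsx hadj) hbC
      obtain ⟨q', hq'⟩ := hq'ex
      have hQ'H : toOut (Raag G) q' ∈ H :=
        Subgroup.subset_closure ⟨v, q', hdomv, hq', rfl⟩
      by_cases hvD : v ∈ C \ star G w
      · -- v ∈ D : identity I2
        have hqex : ∃ q, IsPartialConj G v ((C \ star G w) ∪ {w}) q := by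
          apply pc_exists
          rintro a ha b hadj hb
          rw [Set.mem_union] at ha hb
          push_neg at hb
          have hbu : b ≠ w := fun h => hb.2 (Set.mem_singleton_iff.mpr h)
          rcases ha with ha | ha
          · by_cases hbC : b ∈ C
            · have hbst : b ∈ star G w := by
                by_contra hbs
                exact hb.1 ⟨hbC, hbs⟩
              rcases mem_star_iff.mp hbst with rfl | hadjub
              · exact absurd rfl hbu
              · exact hduv hadjub
            · have hbx : b ≠ x := by
                rintro rfl
                exact (memC_not_star hC ha.1).1 hadj.symm
              by_cases hbsx : b ∈ star G x
              · rcases mem_star_iff.mp hbsx with rfl | hadjxb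
                · exact absurd rfl hbx
                · exact hxv hadjxb
              · exact absurd (cc_adj hC ha.1 hbsx hadj) hbC
          · rw [Set.mem_singleton_iff] at ha
            subst ha
            exact hduv hadj
        obtain ⟨q, hq⟩ := hqex
        have hrel := tv_pc_u_eq2 ht hp hq hvu (fun h => h.2 (self_mem_star w)) hvD
        have hcomm := tv_pcv_comm ht hq hvu
        have hrelO : T * P = toOut (Raag G) q * P * T := by
          have := congrArg (toOut (Raag G)) hrel
          simpa only [map_mul] using this
        have hcommO : T * toOut (Raag G) q = toOut (Raag G) q * T := by
          have := congrArg (toOut (Raag G)) hcomm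
          simpa only [map_mul] using this
        have hQH : toOut (Raag G) q ∈ H := by
          by_cases hcase : w ∈ C ∨ w ∈ star G v
          · have hcond : ∀ z, z ∉ star G v →
                (z ∈ (C \ star G w) ∪ {w} ↔ z ∈ C \ star G v) := by
              intro z hz
              constructor
              · rintro (hzD | hzu)
                · exact ⟨hzD.1, hz⟩
                · rw [Set.mem_singleton_iff] at hzu
                  subst hzu
                  rcases hcase with huC | hust
                  · exact ⟨huC, hz⟩
                  · exact absurd hust hz
              · rintro ⟨hzC, hzv⟩
                by_cases hzu : z = w
                · exact Or.inr (Set.mem_singleton_iff.mpr hzu)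
                · left
                  refine ⟨hzC, ?_⟩
                  rw [mem_star_iff]
                  rintro (rfl | hadjuz)
                  · exact hzu rfl
                  · exact hz (hduv hadjuz)
            rw [pc_congr hq hq' hcond]
            exact hQ'H
          · push_neg at hcase
            by_cases hux : w = x
            · subst hux
              have hcover : ((star G v)ᶜ : Set V) ⊆ (C \ star G w) ∪ {w} := by
                intro z hz
                by_cases hzu : z = w
                · exact Or.inr (Set.mem_singleton_iff.mpr hzu)
                · have hzC : z ∈ C := claimF5 hnosil hC hxv hvD.1 hz hzu
                  exact Or.inl ⟨hzC, cc_subset hC hzC⟩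
              rw [pc_conj_of_compl_subset hq hcover, toOut_conj]
              exact one_mem H
            · exact (claimB3 hnosil hC hduv hne hvD.1 hvD.2 hcase.1 hux).elim
        exact ⟨by rw [rel_conj1 hrelO]; exact mul_mem hQH hPH,
          by rw [rel_conj1' hrelO hcommO]; exact mul_mem (inv_mem hQH) hPH⟩
      · -- v ∉ D
        have hq0ex : ∃ q0, IsPartialConj G v (C \ star G w) q0 := by
          apply pc_exists
          intro a ha b hadj hb
          by_cases hbC : b ∈ C
          · have hbst : b ∈ star G w := by
              by_contra hbs
              exact hb ⟨hbC, hbs⟩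
            rcases mem_star_iff.mp hbst with rfl | hadjub
            · exact absurd (adj_mem_star hadj.symm) ha.2
            · exact hduv hadjub
          · have hbx : b ≠ x := by
              rintro rfl
              exact (memC_not_star hC ha.1).1 hadj.symm
            by_cases hbsx : b ∈ star G x
            · rcases mem_star_iff.mp hbsx with rfl | hadjxb
              · exact absurd rfl hbx
              · exact hxv hadjxb
            · exact absurd (cc_adj hC ha.1 hbsx hadj) hbC
        obtain ⟨q0, hq0⟩ := hq0ex
        by_cases hcase : w ∈ star G v ∨ w ∉ C
        · have hrel := tv_pc_u_eq1 ht hp hq0 hvu (fun h => h.2 (self_mem_star w)) hvD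
          have hcomm := tv_pcv_comm ht hq0 hvu
          have hrelO : T * P = P * toOut (Raag G) q0 * T := by
            have := congrArg (toOut (Raag G)) hrel
            simpa only [map_mul] using this
          have hcommO : T * toOut (Raag G) q0 = toOut (Raag G) q0 * T := by
            have := congrArg (toOut (Raag G)) hcomm
            simpa only [map_mul] using this
          have hQ0H : toOut (Raag G) q0 ∈ H := by
            have hcond : ∀ z, z ∉ star G v →
                (z ∈ C \ star G w ↔ z ∈ C \ star G v) := by
              intro z hz
              constructor
              · rintro ⟨hzC, _⟩
                exact ⟨hzC, hz⟩
              · rintro ⟨hzC, hzv⟩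
                refine ⟨hzC, ?_⟩
                rw [mem_star_iff]
                rintro (rfl | hadjuz)
                · rcases hcase with hc | hc
                  · exact hz hc
                  · exact hc hzC
                · exact hz (hduv hadjuz)
            rw [pc_congr hq0 hq' hcond]
            exact hQ'H
          exact ⟨by rw [rel_conj2 hrelO]; exact mul_mem hPH hQ0H,
            by rw [rel_conj2' hrelO hcommO]; exact mul_mem hPH (inv_mem hQ0H)⟩
        · push_neg at hcase
          have hvnu : v ∉ star G w := fun h => hcase.1 (star_comm.mp h)
          have hvnC : v ∉ C := fun h => hvD ⟨h, hvnu⟩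
          have hDempty := claimB4 hnosil hC hxw hduv hne hcase.2 hvnu hvnC
          have hp1 : p = 1 :=
            pc_eq_one hp (fun z hz => ((hDempty ▸ hz : z ∈ (∅ : Set V)).elim))
          have hP1 : P = 1 := by rw [hPdef, hp1, map_one]
          rw [hP1]
          constructor
          · have e1 : T * (1 : Out (Raag G)) * T⁻¹ = 1 := by group
            rw [e1]; exact one_mem H
          · have e1 : T⁻¹ * (1 : Out (Raag G)) * T = 1 := by group
            rw [e1]; exact one_mem H
    · -- w ≠ u
      by_cases huD : u ∈ C \ star G w
      · by_cases hvD : v ∈ C \ star G w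
        · exact done_of_comm (tv_pc_comm ht hp hwu (Or.inl ⟨huD, hvD⟩))
        · by_cases hvst : v ∈ star G w
          · exact done_of_comm (tv_pc_comm ht hp hwu (Or.inr (Or.inr ⟨huD, hvst⟩)))
          · exact absurd (claimB2 hnosil hC hxw huD hduv hne hvst)
              (fun h => hvD ⟨h, hvst⟩)
      · by_cases hvD : v ∈ C \ star G w
        · exact absurd
            (claimB1 hnosil hC hxw hduv hne (fun h => hwu h.symm) hvD.1 hvD.2) huD
        · exact done_of_comm (tv_pc_comm ht hp hwu (Or.inr (Or.inl ⟨huD, hvD⟩)))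
  · -- partial conjugation generator π^y_E
    have hDucc : IsUnionCC G w (C \ star G w) := isUnionCC_C_diff hC hxw
    by_cases hyst : y ∈ star G w
    · have hwE : w ∉ E := fun h => (ucc_subset hE h) (star_comm.mp hyst)
      have hyD : y ∉ C \ star G w := fun h => h.2 hyst
      exact done_of_comm (pc_pc_comm hT hp hwE (Or.inl ⟨hyst, hyD⟩))
    · have main : ∀ (E' : Set V) (t' : MulAut (Raag G)), IsUnionCC G y E' → w ∉ E' →
          IsPartialConj G y E' t' → t' * p = p * t' := by
        intro E' t' hE' hwE' hT'
        by_cases hyD : y ∈ C \ star G w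
        · have hsub : E' ⊆ C \ star G w := unionE_subset hnosil hyst hE' hwE' hDucc hyD
          have hyE' : y ∉ E' := fun h => (ucc_subset hE' h) (self_mem_star y)
          exact pc_pc_comm hT' hp hwE' (Or.inr (Or.inr ⟨hsub, hyD, hyE'⟩))
        · have hdisj : ∀ z, z ∈ E' → z ∈ C \ star G w → False := fun z hz hz' =>
            unionE_disjoint hnosil hyst hE' hwE' hDucc hyD hz hz'
          exact pc_pc_comm hT' hp hwE' (Or.inr (Or.inl ⟨hdisj, hyD⟩))
      by_cases hwE : w ∈ E
      · have hE₂ : IsUnionCC G y ((star G y)ᶜ \ E) := ucc_compl hE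
        obtain ⟨t₂, hT₂⟩ := pc_exists y ((star G y)ᶜ \ E) (ucc_hS hE₂)
        have hwE₂ : w ∉ (star G y)ᶜ \ E := fun h => h.2 hwE
        have hcomm₂ := main _ t₂ hE₂ hwE₂ hT₂
        have hTT₂ : T * toOut (Raag G) t₂ = 1 :=
          pc_compl_inv hT hT₂ (fun z hz hz2 => hz2.2 hz)
            (fun z hz => by
              by_cases h : z ∈ E
              · exact Or.inl h
              · exact Or.inr ⟨hz, h⟩)
        have hTeq : T = (toOut (Raag G) t₂)⁻¹ := eq_inv_of_mul_eq_one_left hTT₂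
        have hO₂ : toOut (Raag G) t₂ * P = P * toOut (Raag G) t₂ := by
          have := congrArg (toOut (Raag G)) hcomm₂
          simpa only [map_mul] using this
        constructor
        · rw [hTeq, inv_inv, conj_of_comm' hO₂]
          exact hPH
        · rw [hTeq, inv_inv, conj_of_comm hO₂]
          exact hPH
      · exact done_of_comm (main E tA hE hwE hT)

end RaagPaper


open RaagPaper in
/-- If `Γ` has no SIL, then for every equivalence class `X` and every
`X`-component `C`, the subgroup `A^X_C` of `Out(A_Γ)` generated by (the images of) the
partial conjugations in `P^X_C` is a normal subgroup of `SOut⁰(A_Γ)`. -/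
theorem statement17 {V : Type} [Fintype V] (G : SimpleGraph V)
    (hnosil : HasNoSIL G) (X C : Set V)
    (hX : ∃ x : V, X = eqClass G x)
    (hXC : ∃ x ∈ X, IsCC G ((star G x)ᶜ) C) :
    Subgroup.closure (PXC G X C) ≤ SOut0 G ∧
    ((Subgroup.closure (PXC G X C)).subgroupOf (SOut0 G)).Normal := by
  classical
  obtain ⟨x, hxX, hC⟩ := hXC
  have part1 : Subgroup.closure (PXC G X C) ≤ SOut0 G := by
    refine (Subgroup.closure_le _).mpr ?_
    rintro o ⟨w, φ, hdom, hφ, rfl⟩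
    exact Subgroup.subset_closure
      ⟨φ, rfl, Or.inr ⟨w, C \ star G w, isUnionCC_C_diff hC (hdom x hxX), hφ⟩⟩
  set H := Subgroup.closure (PXC G X C) with hH
  have hgen : ∀ o ∈ SOutGens G, o ∈ Subgroup.normalizer (H : Set (Out (Raag G))) := by
    rintro o ⟨tA, rfl, htype⟩
    set T := toOut (Raag G) tA with hT
    have aux1 : ∀ h ∈ H, T * h * T⁻¹ ∈ H := by
      intro h hh
      refine Subgroup.closure_induction ?_ ?_ ?_ ?_ hh
      · rintro ρ ⟨w, p, hdom, hp, rfl⟩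
        exact (key_step hnosil hxX hC tA htype hdom hp).1
      · have e : T * 1 * T⁻¹ = (1 : Out (Raag G)) := by group
        rw [e]; exact one_mem H
      · intro a b _ _ hma hmb
        have e : T * (a * b) * T⁻¹ = (T * a * T⁻¹) * (T * b * T⁻¹) := by group
        rw [e]; exact mul_mem hma hmb
      · intro a _ hma
        have e : T * a⁻¹ * T⁻¹ = (T * a * T⁻¹)⁻¹ := by group
        rw [e]; exact inv_mem hma
    have aux2 : ∀ h ∈ H, T⁻¹ * h * T ∈ H := by
      intro h hh
      refine Subgroup.closure_induction ?_ ?_ ?_ ?_ hh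
      · rintro ρ ⟨w, p, hdom, hp, rfl⟩
        exact (key_step hnosil hxX hC tA htype hdom hp).2
      · have e : T⁻¹ * 1 * T = (1 : Out (Raag G)) := by group
        rw [e]; exact one_mem H
      · intro a b _ _ hma hmb
        have e : T⁻¹ * (a * b) * T = (T⁻¹ * a * T) * (T⁻¹ * b * T) := by group
        rw [e]; exact mul_mem hma hmb
      · intro a _ hma
        have e : T⁻¹ * a⁻¹ * T = (T⁻¹ * a * T)⁻¹ := by group
        rw [e]; exact inv_mem hma
    rw [Subgroup.mem_normalizer_iff]
    intro h
    constructor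
    · intro hh
      exact aux1 h hh
    · intro hh
      have h2 := aux2 _ hh
      have e : T⁻¹ * (T * h * T⁻¹) * T = h := by group
      rwa [e] at h2
  have hle : SOut0 G ≤ Subgroup.normalizer (H : Set (Out (Raag G))) := (Subgroup.closure_le _).mpr hgen
  refine ⟨part1, ?_⟩
  constructor
  intro n hn g
  rw [Subgroup.mem_subgroupOf] at hn ⊢
  have hgnorm := hle g.2
  rw [Subgroup.mem_normalizer_iff] at hgnorm
  have hmem := (hgnorm ↑n).mp hn
  simpa using hmem
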